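/- Let G = (N, E) be a finite simple connected graph with m edges and let e = (i,j) and ê = (w,z) be two distinct edges lying in a common cell of G, i.e., some cycle of G contains both e and ê (in particular e is not a bridge, so G − e is connected). Let B ∈ ℝ^E and let μ be a probability measure on ℝ^E ≅ ℝ^m that is absolutely continuous with respect to the Lebesgue measure and such that μ-almost surely B_a + ω_a > 0 for every a ∈ E. Then μ( { ω : K_{eê}(B + ω) ≠ 0 } ) = 1, where K_{eê}(B̃) is the line outage distribution factor computed with susceptances B̃ = B + ω. -/

import Mathlib

open Finset

variable {V : Type*} [Fintype V] [DecidableEq V]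

/-- `F` is the edge set of a spanning forest of `G` consisting of exactly two
vertex-disjoint trees that together cover all vertices of `G`, one tree containing
every vertex of `N₁` and the other containing every vertex of `N₂`. -/
def IsTwoTreeForest (G : SimpleGraph V) (N₁ N₂ : Set V) (F : Finset (Sym2 V)) : Prop :=
  ↑F ⊆ G.edgeSet ∧
    (SimpleGraph.fromEdgeSet (↑F : Set (Sym2 V))).IsAcyclic ∧
    ∃ u v : V,
      ¬(SimpleGraph.fromEdgeSet (↑F : Set (Sym2 V))).Reachable u v ∧
      (∀ x : V, (SimpleGraph.fromEdgeSet (↑F : Set (Sym2 V))).Reachable x u ∨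
        (SimpleGraph.fromEdgeSet (↑F : Set (Sym2 V))).Reachable x v) ∧
      (∀ x ∈ N₁, (SimpleGraph.fromEdgeSet (↑F : Set (Sym2 V))).Reachable x u) ∧
      (∀ x ∈ N₂, (SimpleGraph.fromEdgeSet (↑F : Set (Sym2 V))).Reachable x v)

/-- The set `T(N₁, N₂)` of spanning forests of `G` consisting of exactly two trees,
one containing `N₁` and the other containing `N₂`, identified with their edge sets. -/
noncomputable def twoForests (G : SimpleGraph V) (N₁ N₂ : Set V) :
    Finset (Finset (Sym2 V)) :=
  letI := Classical.decPred (IsTwoTreeForest G N₁ N₂)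
  Finset.univ.filter (IsTwoTreeForest G N₁ N₂)

/-- `F` is the edge set of a spanning tree of `G`. -/
def IsSpanningTreeEdgeSet (G : SimpleGraph V) (F : Finset (Sym2 V)) : Prop :=
  ↑F ⊆ G.edgeSet ∧ (SimpleGraph.fromEdgeSet (↑F : Set (Sym2 V))).IsTree

/-- The set of (edge sets of) spanning trees of `G`. -/
noncomputable def spanningTrees (G : SimpleGraph V) : Finset (Finset (Sym2 V)) :=
  letI := Classical.decPred (IsSpanningTreeEdgeSet G)
  Finset.univ.filter (IsSpanningTreeEdgeSet G)

/-- The weight `χ(F)` of an edge set `F`: the product of the susceptances of its edges. -/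
def chi (B : Sym2 V → ℝ) (F : Finset (Sym2 V)) : ℝ := ∏ a ∈ F, B a

/-- The line outage distribution factor `K_{e ê}` for the edges `e = (i, j)` and
`ê = (w, z)` of `G`, with susceptances `B`:
`K_{e ê} = B_ê · (Σ_{F ∈ T({i,w},{j,z})} χ(F) − Σ_{F ∈ T({i,z},{j,w})} χ(F)) /
(Σ_{T spanning tree of G − e} χ(T))`. -/
noncomputable def lodf (G : SimpleGraph V) (B : Sym2 V → ℝ) (i j w z : V) : ℝ :=
  B s(w, z) *
    ((∑ F ∈ twoForests G {i, w} {j, z}, chi B F) -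
      ∑ F ∈ twoForests G {i, z} {j, w}, chi B F) /
    ∑ F ∈ spanningTrees (G.deleteEdges {s(i, j)}), chi B F

/-- The susceptances `B + ω`, where the perturbation `ω` is indexed by the edges of `G`. -/
noncomputable def perturb (G : SimpleGraph V) (B : Sym2 V → ℝ) (ω : ↥G.edgeSet → ℝ) :
    Sym2 V → ℝ := fun a =>
  letI := Classical.dec (a ∈ G.edgeSet)
  B a + if h : a ∈ G.edgeSet then ω ⟨a, h⟩ else 0



section AuxiliaryLemmas
open MeasureTheory SimpleGraph


lemma pi_singleton_null {ι : Type*} [Fintype ι] [Nonempty ι] (f : ι → ℝ) :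
    Measure.pi (fun _ : ι => (volume : Measure ℝ)) {f} = 0 := by
  have h : ({f} : Set (ι → ℝ)) = Set.univ.pi fun a => {f a} := by
    ext g
    simp [funext_iff, Set.mem_pi, eq_comm]
  rw [h, Measure.pi_pi]
  exact Finset.prod_eq_zero (Finset.mem_univ (Classical.arbitrary ι)) (by simp)

lemma ae_linear_ne {ι : Type*} [Fintype ι] [DecidableEq ι] (i : ι)
    (g h : (ι → ℝ) → ℝ) (hg : Measurable g) (hh : Measurable h)
    (hgi : ∀ x t, g (Function.update x i t) = g x)
    (hhi : ∀ x t, h (Function.update x i t) = h x)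
    (hgae : ∀ᵐ x : ι → ℝ, g x ≠ 0) :
    ∀ᵐ x : ι → ℝ, g x * x i + h x ≠ 0 := by
  classical
  set Z : Set (ι → ℝ) := {x | g x ≠ 0 ∧ g x * x i + h x = 0} with hZ
  have hfm : Measurable fun x : ι → ℝ => g x * x i + h x :=
    (hg.mul (measurable_pi_apply i)).add hh
  have hZm : MeasurableSet Z := by
    have h1 : MeasurableSet {x : ι → ℝ | g x ≠ 0} :=
      (hg (measurableSet_singleton 0)).compl
    have h2 : MeasurableSet {x : ι → ℝ | g x * x i + h x = 0} :=
      hfm (measurableSet_singleton 0)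
    exact h1.inter h2
  have hZ0 : volume Z = 0 := by
    set p : ι → Prop := fun a => a ≠ i with hp
    set e := MeasurableEquiv.piEquivPiSubtypeProd (fun _ : ι => ℝ) p with he
    have hmp : MeasurePreserving e (Measure.pi fun _ : ι => volume)
        ((Measure.pi fun _ : {a // p a} => (volume : Measure ℝ)).prod
          (Measure.pi fun _ : {a // ¬ p a} => (volume : Measure ℝ))) :=
      measurePreserving_piEquivPiSubtypeProd (fun _ : ι => (volume : Measure ℝ)) p
    have hSm : MeasurableSet ((e.symm : _ → (ι → ℝ)) ⁻¹' Z) :=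
      e.symm.measurable hZm
    have hvol : volume Z =
        ((Measure.pi fun _ : {a // p a} => (volume : Measure ℝ)).prod
          (Measure.pi fun _ : {a // ¬ p a} => (volume : Measure ℝ)))
          ((e.symm : _ → (ι → ℝ)) ⁻¹' Z) := by
      rw [volume_pi, ← hmp.measure_preimage hSm.nullMeasurableSet]
      congr 1
      ext x
      simp
    rw [hvol, Measure.measure_prod_null hSm]
    refine Filter.Eventually.of_forall fun y => ?_
    -- the section over the (unique) coordinate i
    have hi : ¬ p i := by simp [hp]
    haveI : Nonempty {a // ¬ p a} := ⟨⟨i, hi⟩⟩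
    have hkey : ∀ z : {a // ¬ p a} → ℝ,
        (e.symm (y, z) : ι → ℝ) = Function.update (e.symm (y, fun _ => 0)) i (z ⟨i, hi⟩) := by
      intro z
      funext a
      by_cases ha : p a
      · rw [Function.update_of_ne ha]
        simp only [he, MeasurableEquiv.piEquivPiSubtypeProd, Equiv.piEquivPiSubtypeProd,
          MeasurableEquiv.symm, MeasurableEquiv.coe_mk, Equiv.coe_fn_mk, Equiv.coe_fn_symm_mk]
        rw [dif_pos ha, dif_pos ha]
      · have ha' : a = i := not_not.mp ha
        subst ha'
        rw [Function.update_self]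
        simp [he, MeasurableEquiv.piEquivPiSubtypeProd, Equiv.piEquivPiSubtypeProd, hi]
    set x₁ : ι → ℝ := e.symm (y, fun _ => 0) with hx₁
    have hsec : (Prod.mk y ⁻¹' ((e.symm : _ → (ι → ℝ)) ⁻¹' Z)) ⊆
        {z : {a // ¬ p a} → ℝ | g x₁ ≠ 0 ∧ g x₁ * z ⟨i, hi⟩ + h x₁ = 0} := by
      intro z hz
      simp only [Set.mem_preimage, hZ, Set.mem_setOf_eq] at hz
      rw [hkey z] at hz
      have hxi : Function.update x₁ i (z ⟨i, hi⟩) i = z ⟨i, hi⟩ := Function.update_self _ _ _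
      rw [hgi, hhi, hxi] at hz
      exact hz
    refine measure_mono_null hsec ?_
    by_cases hgx : g x₁ = 0
    · have : {z : {a // ¬ p a} → ℝ | g x₁ ≠ 0 ∧ g x₁ * z ⟨i, hi⟩ + h x₁ = 0} = ∅ := by
        ext z; simp [hgx]
      simp [this]
    · have : {z : {a // ¬ p a} → ℝ | g x₁ ≠ 0 ∧ g x₁ * z ⟨i, hi⟩ + h x₁ = 0} =
        {fun _ => -h x₁ / g x₁} := by
        ext z
        simp only [Set.mem_setOf_eq, Set.mem_singleton_iff, hgx, ne_eq, not_false_eq_true,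
          true_and]
        constructor
        · intro hz
          funext a
          have ha : a = (⟨i, hi⟩ : {a // ¬ p a}) := Subtype.ext (not_not.mp a.2)
          rw [ha]
          field_simp
          linarith
        · intro hz
          rw [hz]
          field_simp
          ring
      rw [this]
      exact pi_singleton_null _
  have hsub : {x : ι → ℝ | ¬ (g x * x i + h x ≠ 0)} ⊆ {x | ¬ g x ≠ 0} ∪ Z := by
    intro x hx
    simp only [Set.mem_setOf_eq, not_not] at hx
    by_cases hgx : g x = 0
    · exact Or.inl (by simp [hgx])
    · exact Or.inr ⟨hgx, hx⟩
  rw [Filter.eventually_iff, mem_ae_iff]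
  rw [Filter.eventually_iff, mem_ae_iff] at hgae
  exact measure_mono_null (by exact_mod_cast hsub) (measure_union_null hgae hZ0)


lemma measurable_msum {ι : Type*} [Fintype ι] (c : Finset ι → ℝ) :
    Measurable (fun x : ι → ℝ => ∑ S : Finset ι, c S * ∏ a ∈ S, x a) := by
  refine Finset.measurable_sum _ fun S _ => ?_
  exact measurable_const.mul (Finset.measurable_prod _ fun a _ => measurable_pi_apply a)

lemma ae_multilinear_ne {ι : Type*} [Fintype ι] [DecidableEq ι] (s : Finset ι) :
    ∀ (c : Finset ι → ℝ), (∀ S, c S ≠ 0 → S ⊆ s) → (∃ S, c S ≠ 0) →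
    ∀ᵐ x : ι → ℝ, (∑ S : Finset ι, c S * ∏ a ∈ S, x a) ≠ 0 := by
  classical
  induction s using Finset.induction_on with
  | empty =>
    intro c hsupp ⟨S₀, hS₀⟩
    have hS₀' : S₀ = ∅ := Finset.subset_empty.mp (hsupp S₀ hS₀)
    subst hS₀'
    refine Filter.Eventually.of_forall fun x => ?_
    have : (∑ S : Finset ι, c S * ∏ a ∈ S, x a) = c ∅ := by
      rw [Finset.sum_eq_single ∅]
      · simp
      · intro b _ hb
        have : c b = 0 := by
          by_contra hcb
          exact hb (Finset.subset_empty.mp (hsupp b hcb))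
        simp [this]
      · simp
    rw [this]; exact hS₀
  | @insert i t hi IH =>
    intro c hsupp hne
    set cA : Finset ι → ℝ := fun S => if i ∉ S then c (insert i S) else 0 with hcA
    set cB : Finset ι → ℝ := fun S => if i ∉ S then c S else 0 with hcB
    set g : (ι → ℝ) → ℝ := fun x => ∑ S : Finset ι, cA S * ∏ a ∈ S, x a with hg
    set h : (ι → ℝ) → ℝ := fun x => ∑ S : Finset ι, cB S * ∏ a ∈ S, x a with hh
    have hsuppA : ∀ S, cA S ≠ 0 → S ⊆ t := by
      intro S hS
      simp only [hcA] at hS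
      by_cases hiS : i ∉ S
      · rw [if_pos hiS] at hS
        intro a ha
        have : a ∈ insert i t := hsupp _ hS (Finset.mem_insert_of_mem ha)
        rcases Finset.mem_insert.mp this with rfl | h
        · exact absurd ha hiS
        · exact h
      · simp [hiS] at hS
    have hsuppB : ∀ S, cB S ≠ 0 → S ⊆ t := by
      intro S hS
      simp only [hcB] at hS
      by_cases hiS : i ∉ S
      · rw [if_pos hiS] at hS
        intro a ha
        rcases Finset.mem_insert.mp (hsupp _ hS ha) with rfl | h
        · exact absurd ha hiS
        · exact h
      · simp [hiS] at hS
    -- the key algebraic identity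
    have hkey : ∀ x : ι → ℝ, (∑ S : Finset ι, c S * ∏ a ∈ S, x a) = g x * x i + h x := by
      intro x
      have hsplit := Finset.sum_filter_add_sum_filter_not Finset.univ (fun S : Finset ι => i ∈ S)
        (fun S => c S * ∏ a ∈ S, x a)
      rw [← hsplit]
      have h1 : ∑ S ∈ Finset.univ.filter (fun S : Finset ι => i ∈ S), c S * ∏ a ∈ S, x a
          = g x * x i := by
        simp only [hg]
        have : (∑ S : Finset ι, cA S * ∏ a ∈ S, x a)
            = ∑ S ∈ Finset.univ.filter (fun S : Finset ι => i ∉ S),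
                c (insert i S) * ∏ a ∈ S, x a := by
          rw [Finset.sum_filter]
          refine Finset.sum_congr rfl fun S _ => ?_
          by_cases hiS : i ∈ S
          · simp [hcA, hiS]
          · simp [hcA, hiS]
        rw [this, Finset.sum_mul]
        refine Finset.sum_nbij' (fun S => S.erase i) (fun S => insert i S) ?_ ?_ ?_ ?_ ?_
        · intro S hS
          simp only [Finset.mem_filter, Finset.mem_univ, true_and] at hS ⊢
          exact Finset.notMem_erase i S
        · intro S hS
          simp only [Finset.mem_filter, Finset.mem_univ, true_and]
          exact Finset.mem_insert_self i S
        · intro S hS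
          simp only [Finset.mem_filter, Finset.mem_univ, true_and] at hS
          exact Finset.insert_erase hS
        · intro S hS
          simp only [Finset.mem_filter, Finset.mem_univ, true_and] at hS
          exact Finset.erase_insert hS
        · intro S hS
          simp only [Finset.mem_filter, Finset.mem_univ, true_and] at hS
          rw [Finset.insert_erase hS]
          rw [← Finset.mul_prod_erase S x hS]
          ring
      have h2 : ∑ S ∈ Finset.univ.filter (fun S : Finset ι => ¬ i ∈ S), c S * ∏ a ∈ S, x a
          = h x := by
        simp only [hh]
        rw [Finset.sum_filter]
        refine Finset.sum_congr rfl fun S _ => ?_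
        by_cases hiS : i ∈ S
        · simp [hcB, hiS]
        · simp [hcB, hiS]
      rw [h1, h2]
    by_cases hA : ∃ S, cA S ≠ 0
    · have hgae := IH cA hsuppA hA
      have hgupd : ∀ (x : ι → ℝ) (t' : ℝ), g (Function.update x i t') = g x := by
        intro x t'
        simp only [hg]
        refine Finset.sum_congr rfl fun S _ => ?_
        by_cases hiS : i ∈ S
        · simp [hcA, hiS]
        · congr 1
          refine Finset.prod_congr rfl fun a ha => ?_
          exact Function.update_of_ne (fun hai => hiS (by rw [← hai]; exact ha)) _ _
      have hhupd : ∀ (x : ι → ℝ) (t' : ℝ), h (Function.update x i t') = h x := by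
        intro x t'
        simp only [hh]
        refine Finset.sum_congr rfl fun S _ => ?_
        by_cases hiS : i ∈ S
        · simp [hcB, hiS]
        · congr 1
          refine Finset.prod_congr rfl fun a ha => ?_
          exact Function.update_of_ne (fun hai => hiS (by rw [← hai]; exact ha)) _ _
      have := ae_linear_ne i g h (measurable_msum cA) (measurable_msum cB) hgupd hhupd hgae
      filter_upwards [this] with x hx
      rw [hkey x]; exact hx
    · push_neg at hA
      have hBne : ∃ S, cB S ≠ 0 := by
        obtain ⟨S₀, hS₀⟩ := hne
        by_cases hiS : i ∈ S₀
        · exfalso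
          have h1 : cA (S₀.erase i) ≠ 0 := by
            simp only [hcA]
            rw [if_pos (Finset.notMem_erase i S₀), Finset.insert_erase hiS]
            exact hS₀
          exact h1 (hA _)
        · exact ⟨S₀, by simp only [hcB]; rw [if_pos hiS]; exact hS₀⟩
      have hhae := IH cB hsuppB hBne
      filter_upwards [hhae] with x hx
      rw [hkey x]
      have hg0 : g x = 0 := by
        rw [hg]
        refine Finset.sum_eq_zero fun S _ => by rw [hA S, zero_mul]
      rw [hg0, zero_mul, zero_add]
      exact hx


lemma acyclic_anti {G H : SimpleGraph V} (h : H ≤ G) (hG : G.IsAcyclic) : H.IsAcyclic := by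
  intro v c hc
  exact hG (c.transfer G fun e he => SimpleGraph.edgeSet_mono h (c.edges_subset_edgeSet he))
    (hc.transfer _)

lemma fromEdgeSet_sdiff_eq (s t : Set (Sym2 V)) :
    SimpleGraph.fromEdgeSet (s \ t) = (SimpleGraph.fromEdgeSet s).deleteEdges t := by
  ext a b
  simp only [SimpleGraph.fromEdgeSet_adj, SimpleGraph.deleteEdges_adj, Set.mem_diff]
  tauto

lemma reachable_eq_of_isolated {G : SimpleGraph V} {x y : V} (h : ∀ z, ¬ G.Adj x z)
    (hr : G.Reachable x y) : x = y := by
  obtain ⟨p⟩ := hr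
  cases p with
  | nil => rfl
  | cons h' _ => exact absurd h' (h _)

lemma acyclic_insert_of_not_reachable {F : Set (Sym2 V)} {u v : V} (huv : u ≠ v)
    (hA : (SimpleGraph.fromEdgeSet F).IsAcyclic)
    (hR : ¬(SimpleGraph.fromEdgeSet F).Reachable u v) :
    (SimpleGraph.fromEdgeSet (insert s(u,v) F)).IsAcyclic := by
  intro x c hc
  by_cases he : s(u,v) ∈ c.edges
  · have := (SimpleGraph.adj_and_reachable_delete_edges_iff_exists_cycle
      (G := SimpleGraph.fromEdgeSet (insert s(u,v) F))).mpr ⟨x, c, hc, he⟩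
    obtain ⟨-, hreach⟩ := this
    refine hR (hreach.mono ?_)
    intro a b hab
    simp only [SimpleGraph.sdiff_adj, SimpleGraph.fromEdgeSet_adj, Set.mem_insert_iff,
      Set.mem_singleton_iff, not_and, not_ne_iff] at hab ⊢
    obtain ⟨⟨hmem, hd⟩, hnot⟩ := hab
    rcases hmem with h1 | h2
    · exact absurd (hnot (by simp only [SimpleGraph.fromEdgeSet_adj, Set.mem_singleton_iff]; exact ⟨h1, hd⟩)) (by tauto)
    · exact ⟨h2, hd⟩
  · have hsub : ∀ a ∈ c.edges, a ∈ (SimpleGraph.fromEdgeSet F).edgeSet := by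
      intro a ha
      have h1 : a ∈ (SimpleGraph.fromEdgeSet (insert s(u,v) F)).edgeSet :=
        c.edges_subset_edgeSet ha
      rw [SimpleGraph.edgeSet_fromEdgeSet] at h1 ⊢
      refine ⟨?_, h1.2⟩
      rcases h1.1 with h | h
      · exact absurd (h ▸ ha) he
      · exact h
    exact hA _ (hc.transfer hsub)

lemma path_edges_acyclic {G : SimpleGraph V} : ∀ {x y : V} (p : G.Walk x y), p.IsPath →
    (SimpleGraph.fromEdgeSet {a | a ∈ p.edges}).IsAcyclic := by
  intro x y p
  induction p with
  | nil =>
    intro _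
    rw [SimpleGraph.Walk.edges_nil]
    have h0 : {a : Sym2 V | a ∈ ([] : List (Sym2 V))} = (∅ : Set (Sym2 V)) := by simp
    rw [h0, SimpleGraph.fromEdgeSet_empty]
    exact SimpleGraph.isAcyclic_bot
  | @cons x b y h q IH =>
    intro hp
    rw [SimpleGraph.Walk.cons_isPath_iff] at hp
    have hset : {a : Sym2 V | a ∈ (SimpleGraph.Walk.cons h q).edges} =
        insert s(x, b) {a | a ∈ q.edges} := by
      ext a; simp [SimpleGraph.Walk.edges_cons]
    rw [hset]
    have hiso : ∀ z, ¬ (SimpleGraph.fromEdgeSet {a : Sym2 V | a ∈ q.edges}).Adj x z := by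
      intro z hz
      rw [SimpleGraph.fromEdgeSet_adj] at hz
      exact hp.2 (q.fst_mem_support_of_mem_edges hz.1)
    refine acyclic_insert_of_not_reachable h.ne (IH hp.1) fun hr => ?_
    exact hp.2 ((reachable_eq_of_isolated hiso hr) ▸ q.start_mem_support)

lemma exists_bad_edge {H K : SimpleGraph V} : ∀ {x y : V}, H.Walk x y → ¬ K.Reachable x y →
    ∃ a b : V, H.Adj a b ∧ ¬ K.Reachable a b := by
  intro x y p
  induction p with
  | nil => intro hxy; exact absurd (SimpleGraph.Reachable.refl _) hxy
  | @cons x b y h q IH =>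
    intro hxy
    by_cases hr : K.Reachable x b
    · exact IH fun hby => hxy (hr.trans hby)
    · exact ⟨x, b, h, hr⟩

lemma exists_spanning_forest_ext (H : SimpleGraph V) (hH : H.Preconnected)
    (F₀ : Finset (Sym2 V)) (h₀ : ↑F₀ ⊆ H.edgeSet)
    (hA₀ : (SimpleGraph.fromEdgeSet (F₀ : Set (Sym2 V))).IsAcyclic) :
    ∃ F : Finset (Sym2 V), F₀ ⊆ F ∧ ↑F ⊆ H.edgeSet ∧
      (SimpleGraph.fromEdgeSet (F : Set (Sym2 V))).IsAcyclic ∧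
      (SimpleGraph.fromEdgeSet (F : Set (Sym2 V))).Preconnected := by
  classical
  let P : Finset (Sym2 V) → Prop := fun F => F₀ ⊆ F ∧ ↑F ⊆ H.edgeSet ∧
    (SimpleGraph.fromEdgeSet (F : Set (Sym2 V))).IsAcyclic
  have hne : (Finset.univ.filter P).Nonempty :=
    ⟨F₀, Finset.mem_filter.mpr ⟨Finset.mem_univ _, Finset.Subset.refl _, h₀, hA₀⟩⟩
  obtain ⟨F, hFmem, hFmax⟩ := Finset.exists_max_image (Finset.univ.filter P) Finset.card hne
  obtain ⟨hF₀, hFsub, hFacyc⟩ := (Finset.mem_filter.mp hFmem).2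
  refine ⟨F, hF₀, hFsub, hFacyc, ?_⟩
  intro x y
  by_contra hxy
  obtain ⟨a, b, hab, hnr⟩ := exists_bad_edge ((hH x y).some) hxy
  have hnm : s(a, b) ∉ F := by
    intro hmem
    apply hnr
    apply SimpleGraph.Adj.reachable
    rw [SimpleGraph.fromEdgeSet_adj]
    exact ⟨hmem, hab.ne⟩
  have hP' : P (insert s(a, b) F) := by
    refine ⟨hF₀.trans (Finset.subset_insert _ _), ?_, ?_⟩
    · rw [Finset.coe_insert]
      exact Set.insert_subset (H.mem_edgeSet.mpr hab) hFsub
    · rw [Finset.coe_insert]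
      exact acyclic_insert_of_not_reachable hab.ne hFacyc hnr
  have := hFmax _ (Finset.mem_filter.mpr ⟨Finset.mem_univ _, hP'⟩)
  rw [Finset.card_insert_of_notMem hnm] at this
  omega

lemma trail_decomp_at_edge {G : SimpleGraph V} {w z : V} :
    ∀ {x y : V} (q : G.Walk x y), q.IsTrail → s(w,z) ∈ q.edges →
    ∃ w' z' : V, s(w', z') = s(w, z) ∧
      (G.deleteEdges {s(w,z)}).Reachable x w' ∧ (G.deleteEdges {s(w,z)}).Reachable z' y := by
  intro x y q
  induction q with
  | nil => intro _ h; simp at h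
  | @cons x c y h r IH =>
    intro ht hm
    by_cases heq : s(w, z) = s(x, c)
    · refine ⟨x, c, heq.symm, SimpleGraph.Reachable.refl _, ?_⟩
      have hnr : s(w, z) ∉ r.edges := by
        have := ht.edges_nodup
        rw [SimpleGraph.Walk.edges_cons] at this
        rw [heq]
        exact (List.nodup_cons.mp this).1
      exact ⟨r.toDeleteEdges {s(w,z)} fun e he hmem =>
        hnr (Set.mem_singleton_iff.mp hmem ▸ he)⟩
    · have hm' : s(w, z) ∈ r.edges := by
        rw [SimpleGraph.Walk.edges_cons, List.mem_cons] at hm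
        exact hm.resolve_left heq
      obtain ⟨w', z', he, h1, h2⟩ := IH ht.of_cons hm'
      have hadj : (G.deleteEdges {s(w,z)}).Adj x c :=
        SimpleGraph.deleteEdges_adj.mpr ⟨h, fun hh => heq (Set.mem_singleton_iff.mp hh).symm⟩
      exact ⟨w', z', he, hadj.reachable.trans h1, h2⟩

lemma path_first_edge {G : SimpleGraph V} {x j b : V} (p : G.Walk x b) (hp : p.IsPath)
    (hm : s(x,j) ∈ p.edges) :
    ∃ (h' : G.Adj x j) (q : G.Walk j b), p = SimpleGraph.Walk.cons h' q := by
  cases p with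
  | nil => simp at hm
  | @cons x u b h q =>
    rw [SimpleGraph.Walk.edges_cons, List.mem_cons] at hm
    rcases hm with hm | hm
    · obtain rfl : u = j := Sym2.congr_right.mp hm.symm
      exact ⟨h, q, rfl⟩
    · exfalso
      rw [SimpleGraph.Walk.cons_isPath_iff] at hp
      exact hp.2 (q.fst_mem_support_of_mem_edges hm)

lemma cycle_split {G : SimpleGraph V} {x j : V} (c : G.Walk x x) (hc : c.IsCycle)
    (he : s(x,j) ∈ c.edges) :
    ∃ q : G.Walk j x, q.IsPath ∧ s(x,j) ∉ q.edges ∧ ∀ a ∈ c.edges, a = s(x,j) ∨ a ∈ q.edges := by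
  cases c with
  | nil => simp at he
  | @cons x b x' h r =>
    have hcyc := (SimpleGraph.Walk.cons_isCycle_iff r h).mp hc
    rw [SimpleGraph.Walk.edges_cons, List.mem_cons] at he
    rcases he with he | he
    · obtain rfl : b = j := Sym2.congr_right.mp he.symm
      refine ⟨r, hcyc.1, hcyc.2, fun a ha => ?_⟩
      rw [SimpleGraph.Walk.edges_cons, List.mem_cons] at ha
      exact ha
    · have hm' : s(x,j) ∈ r.reverse.edges := by
        rw [SimpleGraph.Walk.edges_reverse, List.mem_reverse]
        exact he
      obtain ⟨h', q, hq⟩ := path_first_edge r.reverse hcyc.1.reverse hm'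
      -- q : G.Walk j b; let Q := q.append (edge b x)
      have hqpath : q.IsPath ∧ x ∉ q.support := by
        have := hcyc.1.reverse
        rw [hq, SimpleGraph.Walk.cons_isPath_iff] at this
        exact this
      have hjb : j ≠ b := by
        intro hjbe
        subst hjbe
        exact hcyc.2 he
      set Q : G.Walk j x := q.append (SimpleGraph.Walk.cons h.symm SimpleGraph.Walk.nil) with hQ
      have hQrev : Q.reverse = SimpleGraph.Walk.cons h q.reverse := by
        rw [hQ, SimpleGraph.Walk.reverse_append]
        simp
      have hQpath : Q.IsPath := by
        rw [← SimpleGraph.Walk.isPath_reverse_iff, hQrev,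
          SimpleGraph.Walk.cons_isPath_iff]
        refine ⟨hqpath.1.reverse, ?_⟩
        rw [SimpleGraph.Walk.support_reverse, List.mem_reverse]
        exact hqpath.2
      have hQedges : Q.edges = q.edges ++ [s(b, x)] := by
        rw [hQ, SimpleGraph.Walk.edges_append, SimpleGraph.Walk.edges_cons,
          SimpleGraph.Walk.edges_nil]
      have hQnot : s(x, j) ∉ Q.edges := by
        rw [hQedges, List.mem_append]
        rintro (hmem | hmem)
        · exact hqpath.2 (q.fst_mem_support_of_mem_edges hmem)
        · rw [List.mem_singleton, Sym2.eq_iff] at hmem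
          rcases hmem with ⟨hxb, -⟩ | ⟨-, hjb'⟩
          · exact h.ne hxb
          · exact hjb hjb'
      refine ⟨Q, hQpath, hQnot, ?_⟩
      intro a ha
      rw [SimpleGraph.Walk.edges_cons, List.mem_cons] at ha
      rcases ha with rfl | ha
      · right
        rw [hQedges, List.mem_append, List.mem_singleton]
        exact Or.inr (Sym2.eq_swap)
      · have ha' : a ∈ r.reverse.edges := by
          rw [SimpleGraph.Walk.edges_reverse, List.mem_reverse]; exact ha
        rw [hq, SimpleGraph.Walk.edges_cons, List.mem_cons] at ha'
        rcases ha' with rfl | ha'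
        · exact Or.inl rfl
        · right
          rw [hQedges, List.mem_append]
          exact Or.inl ha'


lemma delete_preconnected {G : SimpleGraph V} {i j : V}
    (hr : (G.deleteEdges {s(i,j)}).Reachable i j) :
    ∀ {x y : V}, G.Walk x y → (G.deleteEdges {s(i,j)}).Reachable x y := by
  intro x y p
  induction p with
  | nil => exact SimpleGraph.Reachable.refl _
  | @cons x c y h q IH =>
    refine SimpleGraph.Reachable.trans ?_ IH
    by_cases he : s(x, c) = s(i, j)
    · rcases Sym2.eq_iff.mp he with ⟨rfl, rfl⟩ | ⟨rfl, rfl⟩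
      · exact hr
      · exact hr.symm
    · exact (SimpleGraph.deleteEdges_adj.mpr ⟨h, fun hm => he (Set.mem_singleton_iff.mp hm)⟩).reachable

/-- Existence of a spanning tree edge set. -/
lemma spanningTrees_nonempty {H : SimpleGraph V} (hH : H.Connected) :
    (spanningTrees H).Nonempty := by
  classical
  obtain ⟨F, -, hsub, hacyc, hpre⟩ := exists_spanning_forest_ext H hH.preconnected ∅
    (by simp) (by rw [Finset.coe_empty, SimpleGraph.fromEdgeSet_empty]; exact SimpleGraph.isAcyclic_bot)
  refine ⟨F, ?_⟩
  rw [spanningTrees, Finset.mem_filter]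
  haveI : Nonempty V := hH.nonempty
  exact ⟨Finset.mem_univ _, hsub, ⟨SimpleGraph.Connected.mk hpre, hacyc⟩⟩

/-- Disjointness of the two families of two-tree forests. -/
lemma twoForests_not_mem_both {G : SimpleGraph V} {i j w z : V} {F : Finset (Sym2 V)}
    (h1 : F ∈ twoForests G {i, w} {j, z}) (h2 : F ∈ twoForests G {i, z} {j, w}) : False := by
  classical
  rw [twoForests, Finset.mem_filter] at h1 h2
  obtain ⟨-, -, -, u, v, huv, -, hN1, hN2⟩ := h1
  obtain ⟨-, -, -, u', v', -, -, hN1', hN2'⟩ := h2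
  have hiu := hN1 i (Set.mem_insert _ _)
  have hwu := hN1 w (Set.mem_insert_of_mem _ rfl)
  have hjv := hN2 j (Set.mem_insert _ _)
  have hzv := hN2 z (Set.mem_insert_of_mem _ rfl)
  have hiu' := hN1' i (Set.mem_insert _ _)
  have hzu' := hN1' z (Set.mem_insert_of_mem _ rfl)
  -- i ~ z, z ~ v so i ~ v; also i ~ u; u ~ v contradiction
  have hiz := hiu'.trans hzu'.symm
  have hiv := hiz.trans hzv
  exact huv (hiu.symm.trans hiv)

/-- Existence of a two-tree forest in one of the two families. -/
lemma exists_two_forest {G : SimpleGraph V} (hG : G.Connected)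
    {i j w z : V} (hij : G.Adj i j) (hwz : G.Adj w z) (hne : s(i, j) ≠ s(w, z))
    (hcell : ∃ (v : V) (c : G.Walk v v), c.IsCycle ∧
      s(i, j) ∈ c.edges ∧ s(w, z) ∈ c.edges) :
    ∃ F', F' ∈ twoForests G {i, w} {j, z} ∨ F' ∈ twoForests G {i, z} {j, w} := by
  classical
  obtain ⟨v₀, c, hc, hec, hec2⟩ := hcell
  -- rotate the cycle to start at i
  have hi : i ∈ c.support := c.fst_mem_support_of_mem_edges hec
  set c' := c.rotate i hi with hc'def
  have hc' : c'.IsCycle := hc.rotate hi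
  have hec' : s(i, j) ∈ c'.edges := (c.rotate_edges i hi).mem_iff.mpr hec
  have hec2' : s(w, z) ∈ c'.edges := (c.rotate_edges i hi).mem_iff.mpr hec2
  -- split the cycle at the edge s(i,j)
  obtain ⟨q, hqpath, hqe, hqcov⟩ := cycle_split c' hc' hec'
  have heq2 : s(w, z) ∈ q.edges := (hqcov _ hec2').resolve_left (Ne.symm hne)
  -- move to the graph H = G - e
  set H := G.deleteEdges {s(i, j)} with hHdef
  have hqavoid : ∀ a ∈ q.edges, a ∉ ({s(i,j)} : Set (Sym2 V)) := by
    intro a ha hmem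
    exact hqe (Set.mem_singleton_iff.mp hmem ▸ ha)
  set q' : H.Walk j i := q.toDeleteEdges {s(i,j)} hqavoid with hq'def
  have hq'edges : q'.edges = q.edges := by
    rw [hq'def]
    exact SimpleGraph.Walk.edges_transfer q _
  have hq'path : q'.IsPath := by
    rw [hq'def]
    exact SimpleGraph.Walk.IsPath.transfer _ hqpath
  -- H is preconnected
  have hHpre : H.Preconnected := by
    intro x y
    exact delete_preconnected ⟨q'.reverse⟩ ((hG.preconnected x y).some)
  -- extend the path to a spanning tree of H
  have hF₀sub : ↑q'.edges.toFinset ⊆ H.edgeSet := by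
    intro a ha
    rw [List.coe_toFinset] at ha
    exact q'.edges_subset_edgeSet ha
  have hF₀acyc : (SimpleGraph.fromEdgeSet (↑q'.edges.toFinset : Set (Sym2 V))).IsAcyclic := by
    rw [List.coe_toFinset]
    exact path_edges_acyclic q' hq'path
  obtain ⟨F, hF₀F, hFsub, hFacyc, hFpre⟩ :=
    exists_spanning_forest_ext H hHpre q'.edges.toFinset hF₀sub hF₀acyc
  set T' := SimpleGraph.fromEdgeSet (F : Set (Sym2 V)) with hT'def
  have heF2 : s(w, z) ∈ F := hF₀F (by rw [List.mem_toFinset, hq'edges]; exact heq2)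
  have hT'adj : T'.Adj w z := by
    rw [hT'def, SimpleGraph.fromEdgeSet_adj]
    exact ⟨heF2, hwz.ne⟩
  -- the deleted-edge graph
  have hErase : SimpleGraph.fromEdgeSet (↑(F.erase s(w,z)) : Set (Sym2 V))
      = T'.deleteEdges {s(w,z)} := by
    rw [Finset.coe_erase, fromEdgeSet_sdiff_eq, hT'def]
  set R := (T'.deleteEdges {s(w,z)}).Reachable with hRdef
  -- s(w,z) is a bridge of the tree T'
  have hbridge : ¬ R w z := by
    have h1 := (SimpleGraph.isAcyclic_iff_forall_adj_isBridge.mp hFacyc) hT'adj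
    rw [SimpleGraph.isBridge_iff] at h1
    exact h1
  -- transfer the path q' into T'
  have hq'T : ∀ a ∈ q'.edges, a ∈ T'.edgeSet := by
    intro a ha
    rw [hT'def, SimpleGraph.edgeSet_fromEdgeSet]
    constructor
    · exact hF₀F (List.mem_toFinset.mpr ha)
    · exact SimpleGraph.not_isDiag_of_mem_edgeSet H (q'.edges_subset_edgeSet ha)
  set Q := q'.transfer T' hq'T with hQdef
  have hQtrail : Q.IsTrail := (SimpleGraph.Walk.IsPath.transfer hq'T hq'path).isTrail
  have hQe2 : s(w, z) ∈ Q.edges := by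
    rw [hQdef, SimpleGraph.Walk.edges_transfer, hq'edges]
    exact heq2
  obtain ⟨w', z', hwz', hjw', hz'i⟩ := trail_decomp_at_edge Q hQtrail hQe2
  -- every vertex reaches w or z in T' - ê
  have hcover : ∀ x : V, R x w ∨ R x z := by
    intro x
    obtain ⟨p⟩ := hFpre x w
    set pp := p.toPath with hppdef
    by_cases hmem : s(w, z) ∈ (pp : T'.Walk x w).edges
    · obtain ⟨w'', z'', hwz'', hxw'', -⟩ :=
        trail_decomp_at_edge (pp : T'.Walk x w) pp.2.isTrail hmem
      rcases Sym2.eq_iff.mp hwz'' with ⟨rfl, rfl⟩ | ⟨rfl, rfl⟩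
      · exact Or.inl hxw''
      · exact Or.inr hxw''
    · left
      exact ⟨(pp : T'.Walk x w).toDeleteEdges {s(w,z)}
        (fun a ha hmm => hmem (Set.mem_singleton_iff.mp hmm ▸ ha))⟩
  -- i and j are not R-related
  have hnij : ¬ R i j := by
    intro hij'
    have hwz2 : R w' z' := (hjw'.symm.trans hij'.symm).trans hz'i.symm
    rcases Sym2.eq_iff.mp hwz' with ⟨rfl, rfl⟩ | ⟨rfl, rfl⟩
    · exact hbridge hwz2
    · exact hbridge hwz2.symm
  -- common ingredients for the forest F.erase s(w,z)
  have hsubG : ↑(F.erase s(w,z)) ⊆ G.edgeSet := by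
    intro a ha
    rw [Finset.coe_erase] at ha
    have h1 : a ∈ H.edgeSet := hFsub ha.1
    rw [hHdef, SimpleGraph.edgeSet_deleteEdges] at h1
    exact h1.1
  have hacyc' : (SimpleGraph.fromEdgeSet (↑(F.erase s(w,z)) : Set (Sym2 V))).IsAcyclic := by
    rw [hErase]
    exact acyclic_anti (SimpleGraph.deleteEdges_le _) hFacyc
  refine ⟨F.erase s(w,z), ?_⟩
  rcases hcover i with hiw | hiz
  · -- i is on the w side, so j must be on the z side
    have hjz : R j z := by
      rcases hcover j with hjw | hjz
      · exact absurd (hiw.trans hjw.symm) hnij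
      · exact hjz
    left
    rw [twoForests, Finset.mem_filter]
    refine ⟨Finset.mem_univ _, hsubG, hacyc', w, z, ?_, ?_, ?_, ?_⟩
    · rw [hErase]; exact hbridge
    · rw [hErase]; exact hcover
    · rw [hErase]
      intro x hx
      rcases hx with rfl | hx
      · exact hiw
      · rw [Set.mem_singleton_iff.mp hx]
    · rw [hErase]
      intro x hx
      rcases hx with rfl | hx
      · exact hjz
      · rw [Set.mem_singleton_iff.mp hx]
  · -- i is on the z side, so j must be on the w side
    have hjw : R j w := by
      rcases hcover j with hjw | hjz
      · exact hjw
      · exact absurd (hiz.trans hjz.symm) hnij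
    right
    rw [twoForests, Finset.mem_filter]
    refine ⟨Finset.mem_univ _, hsubG, hacyc', z, w, ?_, ?_, ?_, ?_⟩
    · rw [hErase]; intro hzw; exact hbridge hzw.symm
    · rw [hErase]; intro x; exact (hcover x).symm
    · rw [hErase]
      intro x hx
      rcases hx with rfl | hx
      · exact hiz
      · rw [Set.mem_singleton_iff.mp hx]
    · rw [hErase]
      intro x hx
      rcases hx with rfl | hx
      · exact hjw
      · rw [Set.mem_singleton_iff.mp hx]


lemma sum_powerset_eq {ι : Type*} [Fintype ι] [DecidableEq ι] (s : Finset ι) (f : Finset ι → ℝ) :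
    ∑ t ∈ s.powerset, f t = ∑ t : Finset ι, if t ⊆ s then f t else 0 := by
  rw [← Finset.sum_filter]
  congr 1
  ext t
  simp [Finset.mem_powerset]

noncomputable def liftF (G : SimpleGraph V) [Fintype ↥G.edgeSet] (F : Finset (Sym2 V)) :
    Finset ↥G.edgeSet :=
  Finset.univ.filter (fun a : ↥G.edgeSet => (a : Sym2 V) ∈ F)

lemma mem_liftF {G : SimpleGraph V} [Fintype ↥G.edgeSet] {F : Finset (Sym2 V)}
    {a : ↥G.edgeSet} : a ∈ liftF G F ↔ (a : Sym2 V) ∈ F := by simp [liftF]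

lemma image_liftF {G : SimpleGraph V} [Fintype ↥G.edgeSet] {F : Finset (Sym2 V)}
    (hF : ↑F ⊆ G.edgeSet) : (liftF G F).image Subtype.val = F := by
  ext e
  simp only [Finset.mem_image]
  constructor
  · rintro ⟨a, ha, rfl⟩; exact mem_liftF.mp ha
  · intro he; exact ⟨⟨e, hF he⟩, mem_liftF.mpr he, rfl⟩

lemma liftF_subset {G : SimpleGraph V} [Fintype ↥G.edgeSet] {F F' : Finset (Sym2 V)}
    (hF' : ↑F' ⊆ G.edgeSet) (h : liftF G F' ⊆ liftF G F) : F' ⊆ F := by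
  intro a ha
  have h1 : (⟨a, hF' ha⟩ : ↥G.edgeSet) ∈ liftF G F' := mem_liftF.mpr ha
  exact mem_liftF.mp (h h1)

lemma chi_perturb {G : SimpleGraph V} [Fintype ↥G.edgeSet] (B : Sym2 V → ℝ)
    (ω : ↥G.edgeSet → ℝ) {F : Finset (Sym2 V)} (hF : ↑F ⊆ G.edgeSet) :
    chi (perturb G B ω) F = ∏ a ∈ liftF G F, (ω a + B (a : Sym2 V)) := by
  rw [chi]
  conv_lhs => rw [← image_liftF hF]
  rw [Finset.prod_image (fun x _ y _ h => Subtype.ext h)]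
  refine Finset.prod_congr rfl fun a _ => ?_
  have h : (a : Sym2 V) ∈ G.edgeSet := a.2
  simp only [perturb]
  rw [dif_pos h, Subtype.coe_eta]
  ring

lemma sum_chi_expand {G : SimpleGraph V} [Fintype ↥G.edgeSet] (B : Sym2 V → ℝ)
    (C : Finset (Finset (Sym2 V))) (hC : ∀ F ∈ C, ↑F ⊆ G.edgeSet) (ω : ↥G.edgeSet → ℝ) :
    ∑ F ∈ C, chi (perturb G B ω) F
      = ∑ t : Finset ↥G.edgeSet,
          (∑ F ∈ C, if t ⊆ liftF G F then ∏ a ∈ liftF G F \ t, B (a : Sym2 V) else 0)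
            * ∏ a ∈ t, ω a := by
  have h1 : ∀ F ∈ C, chi (perturb G B ω) F
      = ∑ t : Finset ↥G.edgeSet,
          (if t ⊆ liftF G F then ∏ a ∈ liftF G F \ t, B (a : Sym2 V) else 0)
            * ∏ a ∈ t, ω a := by
    intro F hF
    rw [chi_perturb B ω (hC F hF), Finset.prod_add, sum_powerset_eq]
    refine Finset.sum_congr rfl fun t _ => ?_
    by_cases h : t ⊆ liftF G F
    · simp only [h, if_true]
      ring
    · simp [h]
  rw [Finset.sum_congr rfl h1, Finset.sum_comm]
  refine Finset.sum_congr rfl fun t _ => ?_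
  rw [Finset.sum_mul]


end AuxiliaryLemmas

open MeasureTheory in
/-- Let `e = (i, j)` and `ê = (w, z)` be distinct edges of a finite
simple connected graph `G` lying in a common cell, i.e. on a common cycle. For any
`B : ℝ^E` and any probability measure `μ` on `ℝ^E` that is absolutely continuous with
respect to the Lebesgue measure and under which almost surely `B_a + ω_a > 0` for every
edge `a`, the line outage distribution factor computed with susceptances `B + ω` is
nonzero `μ`-almost surely: `μ{ω : K_{e ê}(B + ω) ≠ 0} = 1`. -/
theorem lodf_ne_zero_almost_surely (G : SimpleGraph V) (hG : G.Connected)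
    [Fintype ↥G.edgeSet]
    (i j w z : V) (hij : G.Adj i j) (hwz : G.Adj w z) (hne : s(i, j) ≠ s(w, z))
    (hcell : ∃ (v : V) (c : G.Walk v v), c.IsCycle ∧
      s(i, j) ∈ c.edges ∧ s(w, z) ∈ c.edges)
    (B : Sym2 V → ℝ)
    (μ : Measure (↥G.edgeSet → ℝ)) [IsProbabilityMeasure μ]
    (hac : μ ≪ volume)
    (hpos : ∀ᵐ ω ∂μ, ∀ a : ↥G.edgeSet, 0 < B (a : Sym2 V) + ω a) :
    μ {ω : ↥G.edgeSet → ℝ | lodf G (perturb G B ω) i j w z ≠ 0} = 1 := by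
  classical
  set A := twoForests G {i, w} {j, z} with hA
  set Bs := twoForests G {i, z} {j, w} with hBs
  have hAsub : ∀ F ∈ A, ↑F ⊆ G.edgeSet := by
    intro F hF
    rw [hA, twoForests, Finset.mem_filter] at hF
    exact hF.2.1
  have hBsub : ∀ F ∈ Bs, ↑F ⊆ G.edgeSet := by
    intro F hF
    rw [hBs, twoForests, Finset.mem_filter] at hF
    exact hF.2.1
  set c : Finset ↥G.edgeSet → ℝ := fun t =>
    (∑ F ∈ A, if t ⊆ liftF G F then ∏ a ∈ liftF G F \ t, B (a : Sym2 V) else 0)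
      - ∑ F ∈ Bs, if t ⊆ liftF G F then ∏ a ∈ liftF G F \ t, B (a : Sym2 V) else 0 with hc
  have hnum : ∀ ω : ↥G.edgeSet → ℝ,
      (∑ F ∈ A, chi (perturb G B ω) F) - (∑ F ∈ Bs, chi (perturb G B ω) F)
      = ∑ t : Finset ↥G.edgeSet, c t * ∏ a ∈ t, ω a := by
    intro ω
    rw [sum_chi_expand B A hAsub ω, sum_chi_expand B Bs hBsub ω, ← Finset.sum_sub_distrib]
    refine Finset.sum_congr rfl fun t _ => ?_
    simp only [hc]
    ring
  -- a nonzero coefficient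
  obtain ⟨F₁, hF₁⟩ := exists_two_forest hG hij hwz hne hcell
  have hABne : (A ∪ Bs).Nonempty := ⟨F₁, Finset.mem_union.mpr hF₁⟩
  obtain ⟨Fm, hFm, hFmax⟩ := Finset.exists_max_image (A ∪ Bs) Finset.card hABne
  have hFmsub : ↑Fm ⊆ G.edgeSet := by
    rcases Finset.mem_union.mp hFm with h | h
    exacts [hAsub _ h, hBsub _ h]
  have heqF : ∀ (C : Finset (Finset (Sym2 V))), C ⊆ A ∪ Bs →
      (∑ F ∈ C, if liftF G Fm ⊆ liftF G F then ∏ a ∈ liftF G F \ liftF G Fm, B (a : Sym2 V)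
        else 0)
      = if Fm ∈ C then 1 else 0 := by
    intro C hCsub
    have hterm : ∀ F ∈ C,
        (if liftF G Fm ⊆ liftF G F then ∏ a ∈ liftF G F \ liftF G Fm, B (a : Sym2 V) else 0)
        = if F = Fm then 1 else 0 := by
      intro F hF
      by_cases hFF : F = Fm
      · subst hFF
        simp [Finset.sdiff_self]
      · have hns : ¬ liftF G Fm ⊆ liftF G F := by
          intro hsub
          have h1 : Fm ⊆ F := liftF_subset hFmsub hsub
          have h2 : F.card ≤ Fm.card := hFmax F (hCsub hF)
          exact hFF (Finset.eq_of_subset_of_card_le h1 h2).symm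
        simp [hns, hFF]
    rw [Finset.sum_congr rfl hterm, Finset.sum_ite_eq' C Fm fun _ => (1 : ℝ)]
  have hcm : c (liftF G Fm) ≠ 0 := by
    simp only [hc]
    rw [heqF A Finset.subset_union_left, heqF Bs Finset.subset_union_right]
    rcases Finset.mem_union.mp hFm with h | h
    · have h2 : Fm ∉ Bs := fun h2 => twoForests_not_mem_both h h2
      simp [h, h2]
    · have h2 : Fm ∉ A := fun h2 => twoForests_not_mem_both h2 h
      simp [h, h2]
  -- the numerator is a.e. nonzero w.r.t. Lebesgue measure
  have hae := ae_multilinear_ne Finset.univ c (fun S _ => Finset.subset_univ S)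
    ⟨liftF G Fm, hcm⟩
  have hvol0 : volume {ω : ↥G.edgeSet → ℝ |
      (∑ t : Finset ↥G.edgeSet, c t * ∏ a ∈ t, ω a) = 0} = 0 := by
    rw [ae_iff] at hae
    simp only [not_not] at hae
    exact hae
  have hmu0 : μ {ω : ↥G.edgeSet → ℝ |
      (∑ t : Finset ↥G.edgeSet, c t * ∏ a ∈ t, ω a) = 0} = 0 := hac hvol0
  have hposset : μ {ω : ↥G.edgeSet → ℝ | ¬ ∀ a : ↥G.edgeSet, 0 < B (a : Sym2 V) + ω a} = 0 := by
    rw [ae_iff] at hpos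
    exact hpos
  -- connectivity of G - e
  have hHreach : (G.deleteEdges {s(i,j)}).Reachable i j := by
    have h1 := (SimpleGraph.adj_and_reachable_delete_edges_iff_exists_cycle (G := G)
      (v := i) (w := j)).mpr (by obtain ⟨v₀, c₀, hc₀, he₀, -⟩ := hcell; exact ⟨v₀, c₀, hc₀, he₀⟩)
    exact h1.2
  have hHconn : (G.deleteEdges {s(i,j)}).Connected := by
    haveI : Nonempty V := hG.nonempty
    refine SimpleGraph.Connected.mk ?_
    intro x y
    exact delete_preconnected hHreach ((hG.preconnected x y).some)
  -- pointwise implication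
  have hptw : ∀ ω : ↥G.edgeSet → ℝ, (∀ a : ↥G.edgeSet, 0 < B (a : Sym2 V) + ω a) →
      (∑ t : Finset ↥G.edgeSet, c t * ∏ a ∈ t, ω a) ≠ 0 →
      lodf G (perturb G B ω) i j w z ≠ 0 := by
    intro ω hp hn
    rw [lodf]
    have hfac : 0 < perturb G B ω s(w, z) := by
      have hm : s(w, z) ∈ G.edgeSet := G.mem_edgeSet.mpr hwz
      simp only [perturb]
      rw [dif_pos hm]
      exact hp ⟨_, hm⟩
    have hden : 0 < ∑ F ∈ spanningTrees (G.deleteEdges {s(i, j)}), chi (perturb G B ω) F := by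
      refine Finset.sum_pos ?_ (spanningTrees_nonempty hHconn)
      intro F hF
      rw [spanningTrees, Finset.mem_filter] at hF
      have hFsub : ↑F ⊆ G.edgeSet := by
        intro a ha
        have h1 := hF.2.1 ha
        rw [SimpleGraph.edgeSet_deleteEdges] at h1
        exact h1.1
      rw [chi]
      refine Finset.prod_pos fun a ha => ?_
      have hm : a ∈ G.edgeSet := hFsub ha
      simp only [perturb]
      rw [dif_pos hm]
      exact hp ⟨a, hm⟩
    rw [← hA, ← hBs, hnum ω]
    exact div_ne_zero (mul_ne_zero hfac.ne' hn) hden.ne'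
  -- conclusion
  have hcompl : {ω : ↥G.edgeSet → ℝ | lodf G (perturb G B ω) i j w z ≠ 0}ᶜ ⊆
      {ω : ↥G.edgeSet → ℝ | ¬ ∀ a : ↥G.edgeSet, 0 < B (a : Sym2 V) + ω a} ∪
      {ω : ↥G.edgeSet → ℝ | (∑ t : Finset ↥G.edgeSet, c t * ∏ a ∈ t, ω a) = 0} := by
    intro ω hω
    simp only [Set.mem_compl_iff, Set.mem_setOf_eq, not_not] at hω
    by_cases h1 : ∀ a : ↥G.edgeSet, 0 < B (a : Sym2 V) + ω a
    · right
      by_contra h2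
      exact hptw ω h1 h2 hω
    · exact Or.inl h1
  have h0 : μ {ω : ↥G.edgeSet → ℝ | lodf G (perturb G B ω) i j w z ≠ 0}ᶜ = 0 :=
    measure_mono_null hcompl (measure_union_null hposset hmu0)
  have hle : μ {ω : ↥G.edgeSet → ℝ | lodf G (perturb G B ω) i j w z ≠ 0} ≤ 1 :=
    prob_le_one
  have hge : (1 : ENNReal) ≤ μ {ω : ↥G.edgeSet → ℝ | lodf G (perturb G B ω) i j w z ≠ 0} := by
    have h2 := measure_union_le (μ := μ)
      {ω : ↥G.edgeSet → ℝ | lodf G (perturb G B ω) i j w z ≠ 0}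
      {ω : ↥G.edgeSet → ℝ | lodf G (perturb G B ω) i j w z ≠ 0}ᶜ
    rw [Set.union_compl_self, measure_univ, h0, add_zero] at h2
    exact h2
  exact le_antisymm hle hge
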